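/- Let L : ℝⁿ → ℝ be differentiable with H-Lipschitz gradient for some H > 0, let the step size α satisfy 0 < α ≤ 1/H, and let c ∈ [0, 1). If θ ∈ ℝⁿ and d ∈ ℝⁿ satisfy ‖∇L(θ) − d‖ ≤ c‖∇L(θ)‖, then L(θ − αd) − L(θ) ≤ −(α/2)(1 − c²)‖∇L(θ)‖². -/

import Mathlib

open RealInnerProductSpace

private lemma line_deriv {n : ℕ} (L : EuclideanSpace ℝ (Fin n) → ℝ)
    (hdiff : Differentiable ℝ L) (x v : EuclideanSpace ℝ (Fin n)) (t : ℝ) :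
    HasDerivAt (fun s : ℝ => L (x + s • v)) ⟪gradient L (x + t • v), v⟫ t := by
  have h1 : HasDerivAt (fun s : ℝ => x + s • v) v t := by
    simpa using ((hasDerivAt_id t).smul_const v).const_add x
  have h2 := (hdiff (x + t • v)).hasGradientAt.hasFDerivAt
  have := h2.comp_hasDerivAt t h1
  simpa [Function.comp_def] using this

private lemma descent_lemma {n : ℕ} (L : EuclideanSpace ℝ (Fin n) → ℝ) (H : ℝ)
    (hH : 0 ≤ H) (hdiff : Differentiable ℝ L)
    (hlip : ∀ x y : EuclideanSpace ℝ (Fin n),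
      ‖gradient L x - gradient L y‖ ≤ H * ‖x - y‖)
    (x v : EuclideanSpace ℝ (Fin n)) :
    L (x + v) ≤ L x + ⟪gradient L x, v⟫ + H / 2 * ‖v‖ ^ 2 := by
  set φ : ℝ → ℝ := fun t =>
    L (x + t • v) - t * ⟪gradient L x, v⟫ - H * t ^ 2 / 2 * ‖v‖ ^ 2 with hφ
  have hderiv : ∀ t : ℝ, HasDerivAt φ
      (⟪gradient L (x + t • v), v⟫ - ⟪gradient L x, v⟫ - H * t * ‖v‖ ^ 2) t := by
    intro t
    have h1 := line_deriv L hdiff x v t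
    have h2 : HasDerivAt (fun s : ℝ => s * ⟪gradient L x, v⟫) ⟪gradient L x, v⟫ t := by
      simpa using (hasDerivAt_id t).mul_const ⟪gradient L x, v⟫
    have h3 : HasDerivAt (fun s : ℝ => H * s ^ 2 / 2 * ‖v‖ ^ 2) (H * t * ‖v‖ ^ 2) t := by
      have : HasDerivAt (fun s : ℝ => s ^ 2) (2 * t) t := by
        simpa using hasDerivAt_pow 2 t
      have := ((this.const_mul H).div_const 2).mul_const (‖v‖ ^ 2)
      rw [show H * t * ‖v‖ ^ 2 = H * (2 * t) / 2 * ‖v‖ ^ 2 by ring]; exact this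
    have := (h1.sub h2).sub h3
    exact this
  have hmono : φ 1 ≤ φ 0 := by
    have hanti : AntitoneOn φ (Set.Icc (0:ℝ) 1) := by
      apply antitoneOn_of_deriv_nonpos (convex_Icc 0 1)
      · exact (continuous_iff_continuousAt.mpr
          (fun t => (hderiv t).differentiableAt.continuousAt)).continuousOn
      · intro t ht
        exact (hderiv t).differentiableAt.differentiableWithinAt
      · intro t ht
        rw [(hderiv t).deriv]
        have ht' : 0 < t := (Set.mem_Ioo.mp (by simpa using ht)).1
        have hcs : ⟪gradient L (x + t • v) - gradient L x, v⟫ ≤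
            ‖gradient L (x + t • v) - gradient L x‖ * ‖v‖ :=
          real_inner_le_norm _ _
        have hl := hlip (x + t • v) x
        have : ‖(x + t • v) - x‖ = t * ‖v‖ := by
          rw [add_sub_cancel_left, norm_smul, Real.norm_eq_abs, abs_of_pos ht']
        rw [this] at hl
        have hsub : ⟪gradient L (x + t • v), v⟫ - ⟪gradient L x, v⟫ =
            ⟪gradient L (x + t • v) - gradient L x, v⟫ := by
          rw [inner_sub_left]
        rw [sub_sub, ← sub_sub, hsub]
        nlinarith [norm_nonneg v, norm_nonneg (gradient L (x + t • v) - gradient L x),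
          mul_le_mul_of_nonneg_right hl (norm_nonneg v)]
    exact hanti (by norm_num) (by norm_num) (by norm_num)
  simp only [hφ, one_smul, zero_smul, add_zero] at hmono
  nlinarith [hmono]

/-- Per-iteration descent guarantee of CAGrad: if `∇L` is `H`-Lipschitz, `0 < α ≤ 1/H`,
`0 ≤ c < 1`, and `‖∇L θ - d‖ ≤ c ‖∇L θ‖`, then
`L (θ - α d) - L θ ≤ -(α/2)(1 - c²) ‖∇L θ‖²`. -/
theorem cagrad_one_step_descent {n : ℕ} (L : EuclideanSpace ℝ (Fin n) → ℝ) (H α c : ℝ)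
    (hH : 0 < H) (hα : 0 < α) (hαH : α ≤ 1 / H) (hc0 : 0 ≤ c) (hc1 : c < 1)
    (hdiff : Differentiable ℝ L)
    (hlip : ∀ x y : EuclideanSpace ℝ (Fin n),
      ‖gradient L x - gradient L y‖ ≤ H * ‖x - y‖)
    (θ d : EuclideanSpace ℝ (Fin n))
    (hd : ‖gradient L θ - d‖ ≤ c * ‖gradient L θ‖) :
    L (θ - α • d) - L θ ≤ -(α / 2) * (1 - c ^ 2) * ‖gradient L θ‖ ^ 2 := by
  set g := gradient L θ with hg
  have key := descent_lemma L H hH.le hdiff hlip θ (-(α • d))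
  rw [← sub_eq_add_neg] at key
  have h1 : ⟪g, -(α • d)⟫ = -(α * ⟪g, d⟫) := by
    rw [inner_neg_right, real_inner_smul_right]
  have h2 : ‖-(α • d)‖ ^ 2 = α ^ 2 * ‖d‖ ^ 2 := by
    rw [norm_neg, norm_smul, Real.norm_eq_abs, mul_pow, sq_abs]
  rw [h1, h2] at key
  have hexp : ‖g - d‖ ^ 2 = ‖g‖ ^ 2 - 2 * ⟪g, d⟫ + ‖d‖ ^ 2 := by
    rw [@norm_sub_sq_real]
  have hd2 : ‖g - d‖ ^ 2 ≤ c ^ 2 * ‖g‖ ^ 2 := by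
    have := mul_self_le_mul_self (norm_nonneg _) hd
    nlinarith [this]
  have hαH' : H * α ≤ 1 := by
    rw [le_div_iff₀ hH] at hαH; nlinarith
  nlinarith [key, sq_nonneg ‖d‖, sq_nonneg α, mul_le_mul_of_nonneg_right hαH'
    (mul_nonneg (mul_nonneg hα.le hα.le) (sq_nonneg ‖d‖)), hexp, hd2]
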